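/- If U is a prefix-free subset of binary strings, then the measure of the open set generated by the n-fold concatenation set U^n equals the n-th power of the measure of [U]; i.e., μ([U^n]) = μ([U])^n. -/

import Mathlib

open scoped ENNReal
open MeasureTheory Filter

def cyl (σ : List Bool) : Set (ℕ → Bool) :=
  {X | ∀ i : Fin σ.length, X i = σ.get i}

def opensOf (U : Set (List Bool)) : Set (ℕ → Bool) :=
  ⋃ σ ∈ U, cyl σ

def PrefixFree (U : Set (List Bool)) : Prop :=
  ∀ σ ∈ U, ∀ τ ∈ U, σ <+: τ → σ = τ

def IsUniform (μ : Measure (ℕ → Bool)) : Prop :=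
  ∀ σ : List Bool, μ (cyl σ) = (1 / 2 : ℝ≥0∞) ^ σ.length

def concatN (U : Set (List Bool)) (n : ℕ) : Set (List Bool) :=
  {σ | ∃ l : List (List Bool), l.length = n ∧ (∀ τ ∈ l, τ ∈ U) ∧ σ = l.flatten}

def seqTake (X : ℕ → Bool) (n : ℕ) : List Bool := List.ofFn fun i : Fin n => X i

def seqAppend (σ : List Bool) (Y : ℕ → Bool) : ℕ → Bool :=
  fun n => if h : n < σ.length then σ.get ⟨n, h⟩ else Y (n - σ.length)

def prefixOfSeq (σ : List Bool) (X : ℕ → Bool) : Prop :=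
  ∀ i : Fin σ.length, X i = σ.get i

def concatOmega (U : Set (List Bool)) : Set (ℕ → Bool) :=
  {X | ∃ f : ℕ → List Bool, (∀ i, f i ∈ U) ∧
    ∀ n : ℕ, prefixOfSeq (((List.range n).map f).flatten) X}

def IsMartingale (d : List Bool → ℝ) : Prop :=
  (∀ σ, 0 ≤ d σ) ∧ ∀ σ, d σ = (d (σ ++ [false]) + d (σ ++ [true])) / 2

def Succeeds (d : List Bool → ℝ) (X : ℕ → Bool) : Prop :=
  ∀ C : ℝ, ∀ m : ℕ, ∃ n ≥ m, C ≤ d (seqTake X n)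

def winningSet (d : List Bool → ℝ) (q : ℝ) : Set (List Bool) :=
  {σ | q ≤ d σ ∧ ∀ τ : List Bool, τ <+: σ → τ ≠ σ → d τ < q}

lemma measurable_cyl (σ : List Bool) : MeasurableSet (cyl σ) := by
  have h : cyl σ = ⋂ i : Fin σ.length, (fun X : ℕ → Bool => X i) ⁻¹' {σ.get i} := by
    ext X; simp [cyl, Set.mem_iInter]
  rw [h]
  exact MeasurableSet.iInter fun i =>
    (measurable_pi_apply (i : ℕ)) (MeasurableSet.singleton (σ.get i))

lemma comparable_of_mem_cyl {σ τ : List Bool} {X : ℕ → Bool}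
    (hσ : X ∈ cyl σ) (hτ : X ∈ cyl τ) : σ <+: τ ∨ τ <+: σ := by
  rcases le_or_gt σ.length τ.length with h | h
  · left
    rw [List.prefix_iff_eq_take]
    apply List.ext_get
    · simp; omega
    · intro i h1 h2
      have e1 := hσ ⟨i, h1⟩
      have h1' : i < τ.length := lt_of_lt_of_le h1 h
      have e2 := hτ ⟨i, h1'⟩
      simp at e1 e2 ⊢
      rw [← e1, e2]
  · right
    rw [List.prefix_iff_eq_take]
    apply List.ext_get
    · simp; omega
    · intro i h1 h2
      have h1' : i < σ.length := lt_of_lt_of_le h1 h.le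
      have e1 := hσ ⟨i, h1'⟩
      have e2 := hτ ⟨i, h1⟩
      simp at e1 e2 ⊢
      rw [← e2, e1]

lemma disjoint_cyl {σ τ : List Bool} (h1 : ¬ σ <+: τ) (h2 : ¬ τ <+: σ) :
    Disjoint (cyl σ) (cyl τ) := by
  rw [Set.disjoint_left]
  intro X hσ hτ
  rcases comparable_of_mem_cyl hσ hτ with h | h
  · exact h1 h
  · exact h2 h

lemma measure_opensOf (μ : Measure (ℕ → Bool)) (hμ : IsUniform μ)
    (S : Set (List Bool)) (hS : PrefixFree S) :
    μ (opensOf S) = ∑' σ : S, (1 / 2 : ℝ≥0∞) ^ (σ : List Bool).length := by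
  have h1 : opensOf S = ⋃ σ : S, cyl (σ : List Bool) := by
    rw [opensOf, Set.biUnion_eq_iUnion]
  have hdisj : Pairwise (Function.onFun Disjoint fun σ : S => cyl (σ : List Bool)) := by
    intro σ τ hne
    apply disjoint_cyl
    · intro hp
      exact hne (Subtype.ext (hS _ σ.2 _ τ.2 hp))
    · intro hp
      exact hne (Subtype.ext (hS _ τ.2 _ σ.2 hp).symm)
  rw [h1, measure_iUnion hdisj fun σ => measurable_cyl _]
  exact tsum_congr fun σ => hμ σ

lemma concatN_zero (U : Set (List Bool)) : concatN U 0 = {[]} := by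
  ext σ
  constructor
  · rintro ⟨l, hl, -, rfl⟩
    rw [List.length_eq_zero_iff] at hl
    simp [hl]
  · rintro rfl
    exact ⟨[], rfl, by simp, rfl⟩

lemma concatN_succ (U : Set (List Bool)) (n : ℕ) :
    concatN U (n + 1) = {σ | ∃ a ∈ U, ∃ b ∈ concatN U n, σ = a ++ b} := by
  ext σ
  constructor
  · rintro ⟨l, hl, hmem, rfl⟩
    cases l with
    | nil => simp at hl
    | cons a t =>
      refine ⟨a, hmem a (by simp), t.flatten, ⟨t, by simpa using hl,
        fun τ hτ => hmem τ (by simp [hτ]), rfl⟩, by simp⟩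
  · rintro ⟨a, ha, b, ⟨t, ht, htm, rfl⟩, rfl⟩
    refine ⟨a :: t, by simp [ht], ?_, by simp⟩
    rintro τ hτ
    rcases List.mem_cons.mp hτ with rfl | h
    · exact ha
    · exact htm τ h

lemma prefixFree_concatN (U : Set (List Bool)) (hU : PrefixFree U) (n : ℕ) :
    PrefixFree (concatN U n) := by
  induction n with
  | zero =>
    rw [concatN_zero]
    rintro σ rfl τ rfl _
    rfl
  | succ n ih =>
    rw [concatN_succ]
    rintro σ ⟨a, ha, b, hb, rfl⟩ τ ⟨c, hc, d, hd, rfl⟩ hp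
    have hac : a <+: c ∨ c <+: a :=
      List.prefix_or_prefix_of_prefix
        ((a.prefix_append b).trans hp) (c.prefix_append d)
    have hac' : a = c := by
      rcases hac with h | h
      · exact hU a ha c hc h
      · exact (hU c hc a ha h).symm
    subst hac'
    rw [List.prefix_append_right_inj] at hp
    rw [ih b hb d hd hp]

lemma concat_injective (U V : Set (List Bool)) (hU : PrefixFree U) :
    Function.Injective (fun p : U × V => (p.1 : List Bool) ++ (p.2 : List Bool)) := by
  rintro ⟨⟨a, ha⟩, ⟨b, hb⟩⟩ ⟨⟨c, hc⟩, ⟨d, hd⟩⟩ h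
  simp only at h
  have hac : a <+: c ∨ c <+: a := by
    apply List.prefix_or_prefix_of_prefix (l₃ := a ++ b)
    · exact a.prefix_append b
    · rw [h]; exact c.prefix_append d
  have hac' : a = c := by
    rcases hac with h' | h'
    · exact hU a ha c hc h'
    · exact (hU c hc a ha h').symm
  subst hac'
  have : b = d := List.append_cancel_left h
  subst this
  rfl

noncomputable def concatEquiv (U V : Set (List Bool)) (hU : PrefixFree U) (n : ℕ)
    (hV : V = concatN U n) :
    U × V ≃ ↥(concatN U (n + 1)) := by
  apply Equiv.ofBijective
    (fun p : U × V => (⟨(p.1 : List Bool) ++ (p.2 : List Bool), by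
      rw [concatN_succ]
      exact ⟨p.1, p.1.2, p.2, hV ▸ p.2.2, rfl⟩⟩ : ↥(concatN U (n + 1))))
  constructor
  · intro p q h
    exact concat_injective U V hU (Subtype.ext_iff.mp h)
  · rintro ⟨σ, hσ⟩
    rw [concatN_succ] at hσ
    obtain ⟨a, ha, b, hb, rfl⟩ := hσ
    exact ⟨(⟨a, ha⟩, ⟨b, hV ▸ hb⟩), rfl⟩

theorem stmt0 (μ : Measure (ℕ → Bool)) (hμ : IsUniform μ)
    (U : Set (List Bool)) (hU : PrefixFree U) (n : ℕ) :
    μ (opensOf (concatN U n)) = μ (opensOf U) ^ n := by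
  induction n with
  | zero =>
    rw [pow_zero, concatN_zero]
    have h1 : opensOf {([] : List Bool)} = cyl [] := by
      simp [opensOf]
    rw [h1, hμ []]
    simp
  | succ n ih =>
    rw [measure_opensOf μ hμ _ (prefixFree_concatN U hU (n + 1)),
      ← (concatEquiv U (concatN U n) hU n rfl).tsum_eq
        (fun σ : ↥(concatN U (n+1)) => (1 / 2 : ℝ≥0∞) ^ (σ : List Bool).length)]
    have key : ∑' (p : U × ↥(concatN U n)),
        (1 / 2 : ℝ≥0∞) ^ ((p.1 : List Bool) ++ (p.2 : List Bool)).length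
        = (∑' σ : U, (1 / 2 : ℝ≥0∞) ^ (σ : List Bool).length) *
          (∑' σ : ↥(concatN U n), (1 / 2 : ℝ≥0∞) ^ (σ : List Bool).length) := by
      have : ∀ p : U × ↥(concatN U n),
          (1 / 2 : ℝ≥0∞) ^ ((p.1 : List Bool) ++ (p.2 : List Bool)).length
          = (1 / 2 : ℝ≥0∞) ^ (p.1 : List Bool).length *
            (1 / 2 : ℝ≥0∞) ^ (p.2 : List Bool).length := by
        intro p; rw [List.length_append, pow_add]
      rw [tsum_congr this, ENNReal.tsum_prod (f := fun (a : U) (b : ↥(concatN U n)) =>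
        (1 / 2 : ℝ≥0∞) ^ (a : List Bool).length * (1 / 2 : ℝ≥0∞) ^ (b : List Bool).length)]
      simp_rw [ENNReal.tsum_mul_left]
      rw [ENNReal.tsum_mul_right]
    rw [show (fun p : U × ↥(concatN U n) => (1 / 2 : ℝ≥0∞) ^
        ((concatEquiv U (concatN U n) hU n rfl p : List Bool)).length)
      = fun p : U × ↥(concatN U n) => (1 / 2 : ℝ≥0∞) ^
        ((p.1 : List Bool) ++ (p.2 : List Bool)).length from rfl]
    rw [key, ← measure_opensOf μ hμ U hU, ← measure_opensOf μ hμ _ (prefixFree_concatN U hU n),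
      ih, pow_succ, mul_comm]
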